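/- The function ψ(x) = x / √(log(e²/x)) is increasing and convex on the interval (0,1), and for all 0 < u ≤ v < 1 it satisfies ψ(v) ≤ ψ(u) + 1.5(v − u) / √(log(e² / ((v+u)/2))). -/

import Mathlib

/-- `ψ(x) = x / √(log(e²/x))`. -/
noncomputable def psi (x : ℝ) : ℝ := x / Real.sqrt (Real.log (Real.exp 1 ^ 2 / x))

lemma log_e2_div {x : ℝ} (hx : 0 < x) :
    Real.log (Real.exp 1 ^ 2 / x) = 2 - Real.log x := by
  rw [Real.log_div (by positivity) hx.ne', Real.log_pow, Real.log_exp]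
  push_cast; ring

lemma psi_eq {x : ℝ} (hx : 0 < x) : psi x = x / Real.sqrt (2 - Real.log x) := by
  rw [psi, log_e2_div hx]

lemma psi_hasDerivAt {x : ℝ} (h0 : 0 < x) (h1 : x < 1) :
    HasDerivAt psi
      ((Real.sqrt (2 - Real.log x))⁻¹ + (2 * Real.sqrt (2 - Real.log x) ^ 3)⁻¹) x := by
  have hL : (0:ℝ) < 2 - Real.log x := by nlinarith [Real.log_neg h0 h1]
  set s := Real.sqrt (2 - Real.log x) with hs_def
  have hs : 0 < s := Real.sqrt_pos.2 hL
  have hs2 : s ^ 2 = 2 - Real.log x := Real.sq_sqrt hL.le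
  have hlog : HasDerivAt Real.log x⁻¹ x := Real.hasDerivAt_log h0.ne'
  have hg : HasDerivAt (fun y => 2 - Real.log y) (-x⁻¹) x := by
    have := (hasDerivAt_const x (2:ℝ)).sub hlog; rw [zero_sub] at this; exact this
  have hsq : HasDerivAt (fun y => Real.sqrt (2 - Real.log y)) (-x⁻¹ / (2 * s)) x :=
    hg.sqrt hL.ne'
  have hdiv : HasDerivAt (fun y => y / Real.sqrt (2 - Real.log y))
      ((1 * s - x * (-x⁻¹ / (2 * s))) / s ^ 2) x := (hasDerivAt_id x).div hsq hs.ne'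
  have heq : psi =ᶠ[nhds x] fun y => y / Real.sqrt (2 - Real.log y) := by
    filter_upwards [Ioi_mem_nhds h0] with y hy
    exact psi_eq hy
  have h := hdiv.congr_of_eventuallyEq heq
  refine h.congr_deriv ?_
  field_simp
  ring

set_option maxHeartbeats 1000000 in
/-- `ψ` is increasing and convex on `(0,1)`, and for `0 < u ≤ v < 1`,
`ψ(v) ≤ ψ(u) + 1.5(v−u)/√(log(e²/((v+u)/2)))`. -/
theorem psi_increasing_convex :
    StrictMonoOn psi (Set.Ioo (0 : ℝ) 1) ∧
    ConvexOn ℝ (Set.Ioo (0 : ℝ) 1) psi ∧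
    ∀ u v : ℝ, 0 < u → u ≤ v → v < 1 →
      psi v ≤ psi u + 1.5 * (v - u) /
        Real.sqrt (Real.log (Real.exp 1 ^ 2 / ((v + u) / 2))) := by
  have hLpos : ∀ x : ℝ, 0 < x → x < 1 → (0:ℝ) < 2 - Real.log x := by
    intro x h0 h1; nlinarith [Real.log_neg h0 h1]
  have hcont : ContinuousOn psi (Set.Ioo 0 1) := fun x hx =>
    (psi_hasDerivAt hx.1 hx.2).continuousAt.continuousWithinAt
  have hderiv : ∀ x ∈ Set.Ioo (0:ℝ) 1, deriv psi x =
      (Real.sqrt (2 - Real.log x))⁻¹ + (2 * Real.sqrt (2 - Real.log x) ^ 3)⁻¹ :=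
    fun x hx => (psi_hasDerivAt hx.1 hx.2).deriv
  refine ⟨?_, ?_, ?_⟩
  · refine strictMonoOn_of_deriv_pos (convex_Ioo 0 1) hcont ?_
    intro x hx
    rw [interior_Ioo] at hx
    rw [hderiv x hx]
    have hs : 0 < Real.sqrt (2 - Real.log x) := Real.sqrt_pos.2 (hLpos x hx.1 hx.2)
    positivity
  · refine MonotoneOn.convexOn_of_deriv (convex_Ioo 0 1) hcont ?_ ?_
    · rw [interior_Ioo]
      exact fun x hx => (psi_hasDerivAt hx.1 hx.2).differentiableAt.differentiableWithinAt
    · rw [interior_Ioo]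
      intro x hx y hy hxy
      rw [hderiv x hx, hderiv y hy]
      have hsy : 0 < Real.sqrt (2 - Real.log y) := Real.sqrt_pos.2 (hLpos y hy.1 hy.2)
      have hle : Real.sqrt (2 - Real.log y) ≤ Real.sqrt (2 - Real.log x) := by
        apply Real.sqrt_le_sqrt
        have := Real.log_le_log hx.1 hxy
        linarith
      gcongr <;> positivity
  · intro u v hu huv hv
    have hv0 : 0 < v := lt_of_lt_of_le hu huv
    have hu1 : u < 1 := lt_of_le_of_lt huv hv
    have hm0 : 0 < (v + u) / 2 := by linarith
    have hm1 : (v + u) / 2 < 1 := by linarith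
    set a := Real.sqrt (2 - Real.log u) with ha_def
    set b := Real.sqrt (2 - Real.log v) with hb_def
    set c := Real.sqrt (2 - Real.log ((v + u) / 2)) with hc_def
    have hA : (0:ℝ) < 2 - Real.log u := hLpos u hu hu1
    have hB : (2:ℝ) < 2 - Real.log v := by nlinarith [Real.log_neg hv0 hv]
    have hC : (0:ℝ) < 2 - Real.log ((v + u) / 2) := hLpos _ hm0 hm1
    have ha0 : 0 < a := Real.sqrt_pos.2 hA
    have hb0 : 0 < b := Real.sqrt_pos.2 (by linarith)
    have hc0 : 0 < c := Real.sqrt_pos.2 hC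
    have ha2 : a ^ 2 = 2 - Real.log u := Real.sq_sqrt hA.le
    have hb2 : b ^ 2 = 2 - Real.log v := Real.sq_sqrt (by linarith)
    have hc2 : c ^ 2 = 2 - Real.log ((v + u) / 2) := Real.sq_sqrt hC.le
    have hba : b ≤ a := Real.sqrt_le_sqrt (by
      have := Real.log_le_log hu huv; linarith)
    -- c² ≤ b² + log 2 ≤ (36/25) b²
    have hCB : c ^ 2 ≤ b ^ 2 + Real.log 2 := by
      have h1 : Real.log (v / 2) ≤ Real.log ((v + u) / 2) :=
        Real.log_le_log (by positivity) (by linarith)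
      have h2 : Real.log (v / 2) = Real.log v - Real.log 2 :=
        Real.log_div hv0.ne' two_ne_zero
      rw [hb2, hc2]; linarith
    have hlog2 : Real.log 2 < 0.6931471808 := Real.log_two_lt_d9
    have hcb : 5 * c ≤ 6 * b := by
      have h36 : 25 * c ^ 2 ≤ 36 * b ^ 2 := by nlinarith
      nlinarith [mul_pos hc0 hb0]
    -- u*(a-b)*(2*b) ≤ v - u
    have hab : (a - b) * (a + b) = Real.log v - Real.log u := by nlinarith
    have hlogvu : u * (Real.log v - Real.log u) ≤ v - u := by
      have h1 : Real.log (v / u) ≤ v / u - 1 := Real.log_le_sub_one_of_pos (by positivity)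
      have h2 : Real.log (v / u) = Real.log v - Real.log u :=
        Real.log_div hv0.ne' hu.ne'
      rw [h2] at h1
      have := mul_le_mul_of_nonneg_left h1 hu.le
      have hvu : u * (v / u - 1) = v - u := by field_simp
      linarith [hvu ▸ this]
    have h1' : u * (a - b) * (2 * b) ≤ v - u := by
      have hsum : 2 * b ≤ a + b := by linarith
      have habnn : 0 ≤ a - b := by linarith
      have : u * (a - b) * (2 * b) ≤ u * (a - b) * (a + b) := by
        apply mul_le_mul_of_nonneg_left hsum (by positivity)
      calc u * (a - b) * (2 * b) ≤ u * (a - b) * (a + b) := this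
        _ = u * ((a - b) * (a + b)) := by ring
        _ = u * (Real.log v - Real.log u) := by rw [hab]
        _ ≤ v - u := hlogvu
    have hab2 : (2:ℝ) ≤ a * b := by nlinarith
    -- key: v/b - u/a ≤ (5/4)(v-u)/b
    have key : v / b - u / a ≤ (5/4) * (v - u) / b := by
      rw [div_sub_div _ _ hb0.ne' ha0.ne', div_le_div_iff₀ (by positivity) hb0]
      have hP : 0 ≤ (v - u) * (a * b - 2) :=
        mul_nonneg (by linarith) (by linarith)
      have hS : 0 ≤ (v - u) - u * (a - b) * (2 * b) := by linarith
      linarith [hP, hS]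
    have step : (5/4) * (v - u) / b ≤ (3/2) * (v - u) / c := by
      rw [div_le_div_iff₀ hb0 hc0]
      have hP2 : 0 ≤ (v - u) * (6 * b - 5 * c) :=
        mul_nonneg (by linarith) (by linarith)
      linarith [hP2]
    rw [psi_eq hv0, psi_eq hu, log_e2_div hm0]
    rw [← hb_def, ← ha_def, ← hc_def]
    have : (1.5 : ℝ) = 3/2 := by norm_num
    rw [this]
    linarith
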